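/- Let C ⊆ ℝ^d be a closed convex set and L a hyperplane. If C ∩ L is nonempty and contains no ray, then C ∩ (L + closedBall(0,r)) is compact for every r ≥ 0. -/

import Mathlib

open Set Metric Pointwise

lemma exists_ray_of_unbounded {E : Type*} [NormedAddCommGroup E] [NormedSpace ℝ E]
    [ProperSpace E]
    {S : Set E} (hS : IsClosed S) (hconv : Convex ℝ S)
    {x₀ : E} (hx₀ : x₀ ∈ S) (hub : ¬ Bornology.IsBounded S) :
    ∃ e : E, ‖e‖ = 1 ∧ ∀ α : ℝ, 0 ≤ α → x₀ + α • e ∈ S := by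
  have hseq : ∀ n : ℕ, ∃ x ∈ S, (n : ℝ) < ‖x - x₀‖ := by
    intro n
    rw [isBounded_iff_forall_norm_le] at hub
    push_neg at hub
    obtain ⟨x, hxS, hx⟩ := hub ((n : ℝ) + ‖x₀‖)
    refine ⟨x, hxS, ?_⟩
    have := norm_sub_norm_le x x₀
    linarith [this]
  choose x hxS hxn using hseq
  have hpos : ∀ n : ℕ, 0 < ‖x n - x₀‖ := fun n =>
    lt_of_le_of_lt (Nat.cast_nonneg n) (hxn n)
  set u : ℕ → E := fun n => ‖x n - x₀‖⁻¹ • (x n - x₀) with hu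
  have husphere : ∀ n, u n ∈ sphere (0 : E) 1 := by
    intro n
    simp only [hu, mem_sphere_iff_norm, sub_zero, norm_smul, norm_inv, norm_norm]
    exact inv_mul_cancel₀ (ne_of_gt (hpos n))
  obtain ⟨e, hes, φ, hφ, htend⟩ := (isCompact_sphere (0 : E) 1).tendsto_subseq husphere
  refine ⟨e, by simpa using hes, ?_⟩
  intro α hα
  have hmem : ∀ᶠ k in Filter.atTop, x₀ + α • u (φ k) ∈ S := by
    filter_upwards [Filter.eventually_ge_atTop ⌈α⌉₊] with k hk
    have hαk : α ≤ ‖x (φ k) - x₀‖ := by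
      calc α ≤ (⌈α⌉₊ : ℝ) := Nat.le_ceil α
      _ ≤ (φ k : ℝ) := by exact_mod_cast le_trans hk (hφ.le_apply)
      _ ≤ ‖x (φ k) - x₀‖ := (hxn (φ k)).le
    set t := ‖x (φ k) - x₀‖
    have htpos : 0 < t := hpos (φ k)
    have hl0 : 0 ≤ α / t := div_nonneg hα htpos.le
    have hl1 : α / t ≤ 1 := (div_le_one htpos).2 hαk
    have h := hconv hx₀ (hxS (φ k)) (by linarith : (0:ℝ) ≤ 1 - α / t) hl0 (by ring)
    have heq : (1 - α / t) • x₀ + (α / t) • x (φ k) = x₀ + α • u (φ k) := by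
      simp only [hu, smul_smul]
      rw [div_eq_mul_inv]
      module
    rwa [heq] at h
  have htend2 : Filter.Tendsto (fun k => x₀ + α • u (φ k)) Filter.atTop
      (nhds (x₀ + α • e)) :=
    Filter.Tendsto.const_add _ (htend.const_smul α)
  exact hS.mem_of_tendsto htend2 hmem

theorem compact_cap_of_no_rays
    (d : ℕ) (C : Set (EuclideanSpace ℝ (Fin d)))
    (hC : IsClosed C) (hconv : Convex ℝ C)
    (v : EuclideanSpace ℝ (Fin d)) (c : ℝ) (hv : v ≠ 0)
    (L : Set (EuclideanSpace ℝ (Fin d)))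
    (hL : L = {y | inner ℝ v y = (c : ℝ)})
    (hne : (C ∩ L).Nonempty)
    (hnoray : ∀ (x e : EuclideanSpace ℝ (Fin d)), e ≠ 0 →
      ¬ ((fun α : ℝ => x + α • e) '' Set.Ici 0 ⊆ C ∩ L))
    (r : ℝ) (hr : 0 ≤ r) :
    IsCompact (C ∩ (L + closedBall (0 : EuclideanSpace ℝ (Fin d)) r)) := by
  have hvnorm : (0:ℝ) < ‖v‖ := norm_pos_iff.2 hv
  -- the slab as a preimage
  have hslab : L + closedBall (0 : EuclideanSpace ℝ (Fin d)) r
      = (innerSL ℝ v) ⁻¹' (Icc (c - r * ‖v‖) (c + r * ‖v‖)) := by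
    ext y
    constructor
    · rintro ⟨l, hl, b, hb, rfl⟩
      rw [hL] at hl
      simp only [mem_closedBall, dist_zero_right] at hb
      have hib : |inner ℝ v b| ≤ ‖v‖ * ‖b‖ := abs_real_inner_le_norm v b
      have hib2 : |(inner ℝ v b : ℝ)| ≤ r * ‖v‖ := by
        refine hib.trans ?_
        rw [mul_comm]
        exact mul_le_mul_of_nonneg_right hb hvnorm.le
      have habs := abs_le.1 hib2
      simp only [mem_preimage, innerSL_apply_apply, inner_add_right, mem_Icc]
      rw [show (inner ℝ v l : ℝ) = c from hl]
      constructor <;> linarith [habs.1, habs.2]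
    · intro hy
      simp only [mem_preimage, innerSL_apply_apply, mem_Icc] at hy
      set t : ℝ := inner ℝ v y - c with ht
      have htabs : |t| ≤ r * ‖v‖ := abs_le.2 ⟨by rw [ht]; linarith [hy.1], by rw [ht]; linarith [hy.2]⟩
      refine ⟨y - (t / ‖v‖^2) • v, ?_, (t / ‖v‖^2) • v, ?_, by module⟩
      · rw [hL]
        simp only [mem_setOf_eq, inner_sub_right, inner_smul_right,
          real_inner_self_eq_norm_sq]
        have hcan : t / ‖v‖ ^ 2 * ‖v‖ ^ 2 = t := by field_simp
        rw [hcan, ht]; ring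
      · simp only [mem_closedBall, dist_zero_right, norm_smul]
        rw [norm_div, Real.norm_eq_abs, Real.norm_eq_abs,
          abs_of_nonneg (by positivity : (0:ℝ) ≤ ‖v‖^2)]
        rw [div_mul_eq_mul_div, sq, ← div_div, mul_div_assoc, div_self hvnorm.ne', mul_one]
        rw [div_le_iff₀ hvnorm]
        exact htabs
  have hslabclosed : IsClosed (L + closedBall (0 : EuclideanSpace ℝ (Fin d)) r) := by
    rw [hslab]
    exact isClosed_Icc.preimage (innerSL ℝ v).continuous
  have hslabconv : Convex ℝ (L + closedBall (0 : EuclideanSpace ℝ (Fin d)) r) := by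
    rw [hslab]
    exact (convex_Icc _ _).linear_preimage (innerSL ℝ v).toLinearMap
  have hSclosed : IsClosed (C ∩ (L + closedBall (0 : EuclideanSpace ℝ (Fin d)) r)) :=
    hC.inter hslabclosed
  have hSconv : Convex ℝ (C ∩ (L + closedBall (0 : EuclideanSpace ℝ (Fin d)) r)) :=
    hconv.inter hslabconv
  obtain ⟨x₁, hx₁C, hx₁L⟩ := hne
  rw [hL] at hx₁L
  have hx₁c : (inner ℝ v x₁ : ℝ) = c := hx₁L
  have hx₁S : x₁ ∈ C ∩ (L + closedBall (0 : EuclideanSpace ℝ (Fin d)) r) := by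
    refine ⟨hx₁C, ?_⟩
    rw [hslab]
    simp only [mem_preimage, innerSL_apply_apply, mem_Icc, hx₁c]
    constructor <;> nlinarith
  by_cases hb : Bornology.IsBounded (C ∩ (L + closedBall (0 : EuclideanSpace ℝ (Fin d)) r))
  · exact Metric.isCompact_of_isClosed_isBounded hSclosed hb
  exfalso
  obtain ⟨e, hen, hray⟩ := exists_ray_of_unbounded hSclosed hSconv hx₁S hb
  have hene : e ≠ 0 := by
    intro h; rw [h] at hen; simp at hen
  have hinner : (inner ℝ v e : ℝ) = 0 := by
    by_contra h0
    have hkey : ∀ α : ℝ, 0 ≤ α → α * |(inner ℝ v e : ℝ)| ≤ r * ‖v‖ := by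
      intro α hα
      have hm := (hray α hα).2
      rw [hslab] at hm
      simp only [mem_preimage, innerSL_apply_apply, inner_add_right, inner_smul_right,
        mem_Icc, hx₁c] at hm
      rcases abs_cases (inner ℝ v e : ℝ) with ⟨hβ, _⟩ | ⟨hβ, _⟩
      · rw [hβ]; nlinarith [hm.2]
      · rw [hβ]; nlinarith [hm.1]
    have hβpos : 0 < |(inner ℝ v e : ℝ)| := abs_pos.2 h0
    have h2 := hkey ((r * ‖v‖ + 1) / |(inner ℝ v e : ℝ)|) (by positivity)
    rw [div_mul_cancel₀ _ hβpos.ne'] at h2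
    linarith
  refine hnoray x₁ e hene ?_
  rintro y ⟨α, hα, rfl⟩
  refine ⟨(hray α hα).1, ?_⟩
  rw [hL]
  simp only [mem_setOf_eq, inner_add_right, inner_smul_right, hinner, hx₁c]
  ring
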